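/- Let μ be a probability measure on a measurable space Ω, let A, B, C be measurable sets, and let r₁, r₂ ∈ [0,1]. If μ(A ∩ B) ≥ (1 − r₁)·μ(A) and μ(A ∩ C) ≥ (1 − r₂)·μ(A), then μ(A ∩ B ∩ C) ≥ (1 − min(r₁ + r₂, 1))·μ(A ∩ B). (This is the semantic soundness of the quantitative cautious-monotonicity rule CM^q: from φ₁ ⇒^{r₁} φ₂ and φ₁ ⇒^{r₂} ψ infer (φ₁ ∧ φ₂) ⇒^{min(r₁+r₂,1)} ψ.) -/

import Mathlib

open MeasureTheory

/-- Soundness of the quantitative cautious-monotonicity rule CM^q. -/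
theorem CMq_sound {Ω : Type*} [MeasurableSpace Ω]
    (μ : Measure Ω) [IsProbabilityMeasure μ] (A B C : Set Ω)
    (hA : MeasurableSet A) (hB : MeasurableSet B) (hC : MeasurableSet C)
    (r₁ r₂ : ℝ) (hr₁0 : 0 ≤ r₁) (hr₁1 : r₁ ≤ 1) (hr₂0 : 0 ≤ r₂) (hr₂1 : r₂ ≤ 1)
    (h₁ : ENNReal.ofReal (1 - r₁) * μ A ≤ μ (A ∩ B))
    (h₂ : ENNReal.ofReal (1 - r₂) * μ A ≤ μ (A ∩ C)) :
    ENNReal.ofReal (1 - min (r₁ + r₂) 1) * μ (A ∩ B) ≤ μ (A ∩ B ∩ C) := by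
  rcases le_or_gt 1 (r₁ + r₂) with h | h
  · rw [min_eq_right h]
    simp
  · rw [min_eq_left h.le]
    have hfin : μ A ≠ ⊤ := measure_ne_top μ A
    -- inclusion-exclusion style
    have hkey : μ (A ∩ B) + μ (A ∩ C) ≤ μ A + μ (A ∩ B ∩ C) := by
      have := measure_union_add_inter (A ∩ B) (hA.inter hC) (μ := μ)
      have hsub : (A ∩ B) ∪ (A ∩ C) ⊆ A := by
        intro x hx; rcases hx with hx | hx <;> exact hx.1
      have hII : (A ∩ B) ∩ (A ∩ C) = A ∩ B ∩ C := by
        ext x; simp [Set.mem_inter_iff]; tauto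
      calc μ (A ∩ B) + μ (A ∩ C) = μ ((A ∩ B) ∪ (A ∩ C)) + μ ((A ∩ B) ∩ (A ∩ C)) :=
            this.symm
        _ ≤ μ A + μ (A ∩ B ∩ C) := by
            rw [hII]; exact add_le_add (measure_mono hsub) le_rfl
    have h3 : ENNReal.ofReal (1 - r₁) * μ A + ENNReal.ofReal (1 - r₂) * μ A ≤
        μ A + μ (A ∩ B ∩ C) := le_trans (add_le_add h₁ h₂) hkey
    have hsum : ENNReal.ofReal (1 - r₁) + ENNReal.ofReal (1 - r₂) =
        1 + ENNReal.ofReal (1 - (r₁ + r₂)) := by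
      rw [← ENNReal.ofReal_add (by linarith) (by linarith), ← ENNReal.ofReal_one,
        ← ENNReal.ofReal_add (by norm_num) (by linarith)]
      ring_nf
    have h4 : μ A + ENNReal.ofReal (1 - (r₁ + r₂)) * μ A ≤ μ A + μ (A ∩ B ∩ C) := by
      calc μ A + ENNReal.ofReal (1 - (r₁ + r₂)) * μ A
          = (1 + ENNReal.ofReal (1 - (r₁ + r₂))) * μ A := by ring
        _ = ENNReal.ofReal (1 - r₁) * μ A + ENNReal.ofReal (1 - r₂) * μ A := by
            rw [← hsum]; ring
        _ ≤ μ A + μ (A ∩ B ∩ C) := h3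
    have h5 : ENNReal.ofReal (1 - (r₁ + r₂)) * μ A ≤ μ (A ∩ B ∩ C) :=
      (ENNReal.add_le_add_iff_left hfin).mp h4
    calc ENNReal.ofReal (1 - (r₁ + r₂)) * μ (A ∩ B)
        ≤ ENNReal.ofReal (1 - (r₁ + r₂)) * μ A := by
          exact mul_le_mul_right (measure_mono Set.inter_subset_left) _
      _ ≤ μ (A ∩ B ∩ C) := h5
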